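/- For every integer n ≥ 3, the independence number of the prime-coprime graph of the dihedral group D_{2n} of order 2n equals the independence number of the prime-coprime graph of the cyclic group Z_n; that is, α(Θ(D_{2n})) = α(Θ(Z_n)). -/

import Mathlib

/-- The prime-coprime graph: distinct vertices `g, h` are adjacent iff
`gcd (orderOf g) (orderOf h)` is `1` or a prime. -/
def primeCoprimeGraph (G : Type*) [Monoid G] : SimpleGraph G where
  Adj g h := g ≠ h ∧
    (Nat.gcd (orderOf g) (orderOf h) = 1 ∨ (Nat.gcd (orderOf g) (orderOf h)).Prime)
  symm := by
    constructor
    rintro g h ⟨hne, hd⟩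
    exact ⟨hne.symm, by rwa [Nat.gcd_comm]⟩
  loopless := by constructor; rintro g ⟨hne, -⟩; exact hne rfl

/-- A set of vertices is independent if no two of its elements are adjacent. -/
def IsIndepSet {V : Type*} (Γ : SimpleGraph V) (s : Set V) : Prop :=
  s.Pairwise fun a b => ¬ Γ.Adj a b

open scoped Classical in
/-- The independence number of a graph on a finite vertex set. -/
noncomputable def indepNum {V : Type*} [Fintype V] (Γ : SimpleGraph V) : ℕ :=
  Finset.univ.sup fun s : Finset V => if IsIndepSet Γ (s : Set V) then s.card else 0

/-- A graph is split if its vertex set can be partitioned into two disjoint nonempty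
subsets, one a clique and the other an independent set. -/
def IsSplit {V : Type*} (Γ : SimpleGraph V) : Prop :=
  ∃ K I : Set V, K.Nonempty ∧ I.Nonempty ∧ Disjoint K I ∧ K ∪ I = Set.univ ∧
    Γ.IsClique K ∧ IsIndepSet Γ I

/-! ### Auxiliary lemmas -/

lemma card_le_indepNum {V : Type*} [Fintype V] {Γ : SimpleGraph V} {s : Finset V}
    (h : IsIndepSet Γ (s : Set V)) : s.card ≤ indepNum Γ := by
  classical
  have := Finset.le_sup (f := fun s : Finset V =>
    if IsIndepSet Γ (s : Set V) then s.card else 0) (Finset.mem_univ s)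
  unfold indepNum
  simpa [h] using this

lemma indepNum_le_of {V : Type*} [Fintype V] {Γ : SimpleGraph V} {k : ℕ}
    (h : ∀ s : Finset V, IsIndepSet Γ (s : Set V) → s.card ≤ k) : indepNum Γ ≤ k := by
  classical
  unfold indepNum
  apply Finset.sup_le
  intro s _
  split
  · exact h s ‹_›
  · exact Nat.zero_le k

def dihedralHom (n : ℕ) : Multiplicative (ZMod n) →* DihedralGroup n where
  toFun x := DihedralGroup.r (Multiplicative.toAdd x)
  map_one' := rfl
  map_mul' _ _ := rfl

lemma dihedralHom_inj (n : ℕ) : Function.Injective (dihedralHom n) := by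
  intro x y h
  have h' : DihedralGroup.r (Multiplicative.toAdd x) = DihedralGroup.r (Multiplicative.toAdd y) := h
  simpa [DihedralGroup.r.injEq] using h'

lemma orderOf_dihedralHom (n : ℕ) (x : Multiplicative (ZMod n)) :
    orderOf (dihedralHom n x) = orderOf x :=
  orderOf_injective (dihedralHom n) (dihedralHom_inj n) x

lemma adj_dihedralHom (n : ℕ) (x y : Multiplicative (ZMod n)) :
    (primeCoprimeGraph (DihedralGroup n)).Adj (dihedralHom n x) (dihedralHom n y) ↔
    (primeCoprimeGraph (Multiplicative (ZMod n))).Adj x y := by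
  show (_ ≠ _ ∧ _) ↔ (_ ≠ _ ∧ _)
  rw [orderOf_dihedralHom, orderOf_dihedralHom, (dihedralHom_inj n).ne_iff]

lemma gcd_two_prime_or_one (m : ℕ) : Nat.gcd 2 m = 1 ∨ (Nat.gcd 2 m).Prime := by
  rcases (Nat.prime_two).eq_one_or_self_of_dvd _ (Nat.gcd_dvd_left 2 m) with h | h
  · exact Or.inl h
  · right; rw [h]; exact Nat.prime_two

theorem indepNum_dihedral (n : ℕ) [NeZero n] (hn : 3 ≤ n) :
    indepNum (primeCoprimeGraph (DihedralGroup n)) =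
      indepNum (primeCoprimeGraph (Multiplicative (ZMod n))) := by
  classical
  apply le_antisymm
  · apply indepNum_le_of
    intro s hs
    by_cases hrefl : ∃ i, DihedralGroup.sr i ∈ s
    · -- a reflection is adjacent to everything, so `s` is a singleton
      obtain ⟨i, hi⟩ := hrefl
      have hcard : s.card ≤ 1 := by
        rw [Finset.card_le_one]
        intro a ha b hb
        by_contra hab
        have hne : a ≠ DihedralGroup.sr i ∨ b ≠ DihedralGroup.sr i := by
          by_contra h
          push_neg at h
          exact hab (h.1.trans h.2.symm)
        have key : ∀ c ∈ s, c ≠ DihedralGroup.sr i → False := by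
          intro c hc hcne
          have := hs (Finset.mem_coe.mpr hi) (Finset.mem_coe.mpr hc) (Ne.symm hcne)
          exact this ⟨Ne.symm hcne, by
            rw [DihedralGroup.orderOf_sr]
            exact gcd_two_prime_or_one _⟩
        rcases hne with h | h
        · exact key a ha h
        · exact key b hb h
      have hone : (1 : ℕ) ≤ indepNum (primeCoprimeGraph (Multiplicative (ZMod n))) := by
        have : IsIndepSet (primeCoprimeGraph (Multiplicative (ZMod n)))
            ((({1} : Finset (Multiplicative (ZMod n))) : Set (Multiplicative (ZMod n)))) := by
          simp [IsIndepSet]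
        simpa using card_le_indepNum this
      exact hcard.trans hone
    · -- all elements of `s` are rotations
      push_neg at hrefl
      set t := s.preimage (dihedralHom n) ((dihedralHom_inj n).injOn)
      have himg : t.image (dihedralHom n) = s := by
        ext b
        simp only [Finset.mem_image, Finset.mem_preimage, t]
        constructor
        · rintro ⟨x, hx, rfl⟩; exact hx
        · intro hb
          cases b with
          | r j => exact ⟨Multiplicative.ofAdd j, hb, rfl⟩
          | sr j => exact absurd hb (hrefl j)
      have hcard : s.card = t.card := by
        rw [← himg, Finset.card_image_of_injective _ (dihedralHom_inj n)]
      have ht : IsIndepSet (primeCoprimeGraph (Multiplicative (ZMod n))) (t : Set _) := by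
        intro x hx y hy hxy hadj
        have hfx : dihedralHom n x ∈ s := Finset.mem_preimage.mp hx
        have hfy : dihedralHom n y ∈ s := Finset.mem_preimage.mp hy
        exact hs (Finset.mem_coe.mpr hfx) (Finset.mem_coe.mpr hfy)
          ((dihedralHom_inj n).ne hxy) ((adj_dihedralHom n x y).mpr hadj)
      rw [hcard]
      exact card_le_indepNum ht
  · apply indepNum_le_of
    intro t ht
    have hs : IsIndepSet (primeCoprimeGraph (DihedralGroup n))
        ((t.image (dihedralHom n) : Finset (DihedralGroup n)) : Set (DihedralGroup n)) := by
      intro a ha b hb hab hadj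
      simp only [Finset.coe_image, Set.mem_image, Finset.mem_coe] at ha hb
      obtain ⟨x, hx, rfl⟩ := ha
      obtain ⟨y, hy, rfl⟩ := hb
      have hxy : x ≠ y := fun h => hab (by rw [h])
      exact ht hx hy hxy ((adj_dihedralHom n x y).mp hadj)
    have := card_le_indepNum hs
    rwa [Finset.card_image_of_injective _ (dihedralHom_inj n)] at this
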